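/- Let ξ = (w_1,…,w_N) ∈ Ξ with X_1(ξ) = {i : w_i = 0}, X_3(ξ) = {i : w_i = 1/n}, X_2(ξ) = {i : 0 < w_i < 1/n}, and suppose there exist ξ_0 ∈ Ξ and δ > 0 with Φ(ξ) − Φ(ξ_0) > δ. If X_2(ξ) is empty, then min_{i ∈ X_1(ξ)} F_Φ(ξ; i) − max_{i ∈ X_3(ξ)} F_Φ(ξ; i) ≤ −δ. -/
import Mathlib


theorem stmt_6
    (N : ℕ) (hN : 1 ≤ N)
    (Δ : Set (Fin N → ℝ))
    (hΔ : Δ = {w : Fin N → ℝ | (∀ i, 0 ≤ w i) ∧ ∑ i, w i = 1})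
    (Φ : (Fin N → ℝ) → ℝ)
    (hconv : ConvexOn ℝ Δ Φ)
    (F : (Fin N → ℝ) → (Fin N → ℝ) → ℝ)
    (hF : ∀ ξ ∈ Δ, ∀ η ∈ Δ,
      Filter.Tendsto (fun α : ℝ => (Φ ((1 - α) • ξ + α • η) - Φ ξ) / α)
        (nhdsWithin 0 (Set.Ioi 0)) (nhds (F ξ η)))
    (hlin : ∀ ξ ∈ Δ, ∀ η ∈ Δ, F ξ η = ∑ i, η i * F ξ (Pi.single i 1))
    (n : ℕ) (hn1 : 1 ≤ n) (hnN : n ≤ N)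
    (Ξ : Set (Fin N → ℝ))
    (hΞ : Ξ = {w : Fin N → ℝ | w ∈ Δ ∧ ∀ i, w i ≤ 1 / (n : ℝ)})
    (ξ : Fin N → ℝ) (hmem : ξ ∈ Ξ)
    (X1 X2 X3 : Set (Fin N))
    (hX1 : X1 = {i | ξ i = 0})
    (hX2 : X2 = {i | 0 < ξ i ∧ ξ i < 1 / (n : ℝ)})
    (hX3 : X3 = {i | ξ i = 1 / (n : ℝ)})
    (ξ0 : Fin N → ℝ) (hξ0 : ξ0 ∈ Ξ)
    (δ : ℝ) (hδ : 0 < δ)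
    (hgap : Φ ξ - Φ ξ0 > δ)
    (hX2e : X2 = ∅) :
    sInf ((fun i => F ξ (Pi.single i 1)) '' X1)
      - sSup ((fun i => F ξ (Pi.single i 1)) '' X3) ≤ -δ := by
  classical
  subst hΔ hΞ hX1 hX2 hX3
  obtain ⟨⟨hξnn, hξsum⟩, hξub⟩ := hmem
  obtain ⟨⟨hξ0nn, hξ0sum⟩, hξ0ub⟩ := hξ0
  set f : Fin N → ℝ := fun i => F ξ (Pi.single i 1) with hf
  have hξΔ : ξ ∈ {w : Fin N → ℝ | (∀ i, 0 ≤ w i) ∧ ∑ i, w i = 1} := ⟨hξnn, hξsum⟩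
  have hξ0Δ : ξ0 ∈ {w : Fin N → ℝ | (∀ i, 0 ≤ w i) ∧ ∑ i, w i = 1} := ⟨hξ0nn, hξ0sum⟩
  have hnpos : (0:ℝ) < (n:ℝ) := by exact_mod_cast hn1
  have hinvpos : (0:ℝ) < 1 / (n:ℝ) := by positivity
  -- each coordinate is 0 or 1/n
  have hdi : ∀ i, ξ i = 0 ∨ ξ i = 1 / (n:ℝ) := by
    intro i
    by_contra h
    push_neg at h
    have hi : i ∈ ({i | 0 < ξ i ∧ ξ i < 1/(n:ℝ)} : Set (Fin N)) :=
      ⟨lt_of_le_of_ne (hξnn i) (Ne.symm h.1), lt_of_le_of_ne (hξub i) h.2⟩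
    rw [hX2e] at hi
    exact hi
  -- F ξ ξ = 0
  have hFself : F ξ ξ = 0 := by
    have h1 := hF ξ hξΔ ξ hξΔ
    have h2 : (fun α : ℝ => (Φ ((1 - α) • ξ + α • ξ) - Φ ξ) / α) = fun _ : ℝ => (0:ℝ) := by
      funext α
      have hx : (1 - α) • ξ + α • ξ = ξ := by module
      rw [hx]; simp
    rw [h2] at h1
    exact tendsto_nhds_unique h1 tendsto_const_nhds
  -- F ξ ξ0 ≤ Φ ξ0 - Φ ξ
  have hFle : F ξ ξ0 ≤ Φ ξ0 - Φ ξ := by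
    refine le_of_tendsto (hF ξ hξΔ ξ0 hξ0Δ) ?_
    filter_upwards [Ioc_mem_nhdsGT_of_mem (by norm_num : (0:ℝ) ∈ Set.Ico (0:ℝ) 1)] with α hα
    have hconvx := hconv.2 hξΔ hξ0Δ (by linarith [hα.2] : (0:ℝ) ≤ 1 - α) hα.1.le (by ring)
    simp only [smul_eq_mul] at hconvx
    rw [div_le_iff₀ hα.1]
    nlinarith [hconvx]
  have hexp0 : ∑ i, ξ i * f i = 0 := by
    have h := hlin ξ hξΔ ξ hξΔ
    rw [hFself] at h
    exact h.symm
  have hexpξ0 : F ξ ξ0 = ∑ i, ξ0 i * f i := hlin ξ hξΔ ξ0 hξ0Δ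
  set S1 : Finset (Fin N) := Finset.univ.filter (fun i => ξ i = 0) with hS1def
  set S3 : Finset (Fin N) := Finset.univ.filter (fun i => ξ i = 1/(n:ℝ)) with hS3def
  have hfilter : Finset.univ.filter (fun i => ¬ ξ i = 0) = S3 := by
    apply Finset.filter_congr
    intro i _
    have hn0 : n ≠ 0 := by omega
    rcases hdi i with h | h
    · simp [h, hinvpos.ne', eq_comm, hn0]
    · simp [h, hinvpos.ne', hn0]
  have hsplit : ∀ g : Fin N → ℝ, ∑ i, g i = ∑ i ∈ S1, g i + ∑ i ∈ S3, g i := by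
    intro g
    rw [← Finset.sum_filter_add_sum_filter_not Finset.univ (fun i => ξ i = 0) g, hfilter]
  have hS1ξ : ∑ i ∈ S1, ξ i = 0 :=
    Finset.sum_eq_zero (fun i hi => (Finset.mem_filter.mp hi).2)
  have hS3ξ : ∑ i ∈ S3, ξ i = 1 := by
    have := hsplit ξ
    rw [hξsum, hS1ξ] at this
    linarith
  have hS3f : ∑ i ∈ S3, f i = 0 := by
    have h1 : ∑ i ∈ S1, ξ i * f i = 0 :=
      Finset.sum_eq_zero (fun i hi => by rw [(Finset.mem_filter.mp hi).2, zero_mul])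
    have h2 : ∑ i ∈ S3, ξ i * f i = (1/(n:ℝ)) * ∑ i ∈ S3, f i := by
      rw [Finset.mul_sum]
      exact Finset.sum_congr rfl (fun i hi => by rw [(Finset.mem_filter.mp hi).2])
    have h3 := hsplit (fun i => ξ i * f i)
    rw [hexp0, h1, h2] at h3
    have h4 : (1/(n:ℝ)) * ∑ i ∈ S3, f i = 0 := by linarith
    rcases mul_eq_zero.mp h4 with h | h
    · exact absurd h hinvpos.ne'
    · exact h
  -- bounds
  have hfin1 : (f '' {i | ξ i = 0}).Finite := Set.Finite.image _ (Set.toFinite _)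
  have hfin3 : (f '' {i | ξ i = 1/(n:ℝ)}).Finite := Set.Finite.image _ (Set.toFinite _)
  set m := sInf (f '' {i | ξ i = 0}) with hm
  set M := sSup (f '' {i | ξ i = 1/(n:ℝ)}) with hM
  have hmle : ∀ i ∈ S1, m ≤ f i := fun i hi =>
    csInf_le hfin1.bddBelow ⟨i, (Finset.mem_filter.mp hi).2, rfl⟩
  have hMge : ∀ i ∈ S3, f i ≤ M := fun i hi =>
    le_csSup hfin3.bddAbove ⟨i, (Finset.mem_filter.mp hi).2, rfl⟩
  set t := ∑ i ∈ S1, ξ0 i with ht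
  set s := ∑ i ∈ S3, ξ0 i with hs
  have hts : t + s = 1 := by
    have := hsplit ξ0
    rw [hξ0sum] at this
    linarith
  have ht0 : 0 ≤ t := Finset.sum_nonneg (fun i _ => hξ0nn i)
  have hs0 : 0 ≤ s := Finset.sum_nonneg (fun i _ => hξ0nn i)
  have ht1 : t ≤ 1 := by linarith
  have e1 : t * m ≤ ∑ i ∈ S1, ξ0 i * f i := by
    rw [ht, Finset.sum_mul]
    exact Finset.sum_le_sum (fun i hi => mul_le_mul_of_nonneg_left (hmle i hi) (hξ0nn i))
  have e2 : ∑ i ∈ S3, ξ0 i * f i = ∑ i ∈ S3, (ξ0 i - 1/(n:ℝ)) * f i := by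
    simp only [sub_mul]
    rw [Finset.sum_sub_distrib, ← Finset.mul_sum, hS3f, mul_zero, sub_zero]
  have e3 : ∑ i ∈ S3, (ξ0 i - 1/(n:ℝ)) * M ≤ ∑ i ∈ S3, (ξ0 i - 1/(n:ℝ)) * f i :=
    Finset.sum_le_sum (fun i hi =>
      mul_le_mul_of_nonpos_left (hMge i hi) (by linarith [hξ0ub i]))
  have e4 : ∑ i ∈ S3, (ξ0 i - 1/(n:ℝ)) = s - 1 := by
    rw [Finset.sum_sub_distrib]
    have : ∑ _i ∈ S3, (1:ℝ)/(n:ℝ) = 1 := by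
      calc ∑ i ∈ S3, (1:ℝ)/(n:ℝ) = ∑ i ∈ S3, ξ i :=
            Finset.sum_congr rfl (fun i hi => ((Finset.mem_filter.mp hi).2).symm)
        _ = 1 := hS3ξ
    rw [this, hs]
  have e5 : (s - 1) * M = ∑ i ∈ S3, (ξ0 i - 1/(n:ℝ)) * M := by
    rw [← Finset.sum_mul, e4]
  have key : t * m + (s - 1) * M ≤ F ξ ξ0 := by
    rw [hexpξ0, hsplit (fun i => ξ0 i * f i)]
    have e2' := e2
    linarith [e1, e3, e5, e2']
  have hsm : (s - 1) * M = -t * M := by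
    have : s - 1 = -t := by linarith
    rw [this]
  have hlt : t * (m - M) < -δ := by nlinarith [key, hFle, hgap, hsm]
  -- conclude
  show m - M ≤ -δ
  by_contra hc
  push_neg at hc
  have h1 : 0 ≤ t * ((m - M) + δ) := mul_nonneg ht0 (by linarith)
  have h2 : t * δ ≤ δ := mul_le_of_le_one_left hδ.le ht1
  nlinarith [hlt, h1, h2]
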